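/- arXiv:1311.1659 — 5 statements merged into one kernel-verified Lean document; each statement's English description precedes it below -/
import Mathlib

section
/- Let f(z) = z^{m+1}/(m+1) on ℂ and let h be a polynomial. Then the formal higher residue of h equals ∑_{r≥0} (-t)^r (∏_{k=0}^{r-1} (m + k(m+1))) · Res_{z=0}( h(z) dz / z^{r(m+1)+m} ), i.e. the coefficient of t^r is (-1)^r ∏_{k=0}^{r-1}(m+k(m+1)) times the coefficient of z^{r(m+1)+m-1} in h. -/
/-- Formal Laurent coefficients of a polynomial `h`, indexed by `ℤ`. -/
noncomputable def lcoeff (h : Polynomial ℂ) : ℤ → ℂ :=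
  fun n => if 0 ≤ n then h.coeff n.toNat else 0

/-- Multiplication by `z^(-m)` on formal Laurent coefficient functions. -/
def mulZinv (m : ℕ) (g : ℤ → ℂ) : ℤ → ℂ := fun n => g (n + m)

/-- Formal derivative `∂/∂z` on formal Laurent coefficient functions. -/
def lderiv (g : ℤ → ℂ) : ℤ → ℂ := fun n => ((n + 1 : ℤ) : ℂ) * g (n + 1)

lemma iter_eq (m : ℕ) : ∀ (r : ℕ) (g : ℤ → ℂ) (n : ℤ),
    ((lderiv ∘ mulZinv m)^[r] g) n =
      (∏ k ∈ Finset.range r, ((n : ℂ) + 1 + k * (m + 1))) * g (n + r * (m + 1)) := by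
  intro r
  induction r with
  | zero => intro g n; simp
  | succ r ih =>
    intro g n
    rw [Function.iterate_succ_apply, ih, Finset.prod_range_succ]
    simp only [Function.comp_apply, lderiv, mulZinv]
    have harg : n + (r : ℤ) * ((m : ℤ) + 1) + 1 + m = n + ((r : ℕ) + 1 : ℕ) * ((m : ℤ) + 1) := by
      push_cast; ring
    rw [harg]
    push_cast
    ring

/-- For the `A_m`-singularity `f(z) = z^{m+1}/(m+1)` (so `f' = z^m`), the higher
residue of a polynomial `h`, computed by the iterated formula
`Res^f(h) = ∑_{r≥0} (-t)^r Res_{z=0}((1/f')(∂_z ∘ (1/f'))^r(h) dz)`, equals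
`∑_{r≥0} (-t)^r (∏_{k=0}^{r-1}(m+k(m+1))) Res_{z=0}(h dz / z^{r(m+1)+m})`; i.e.
the coefficient of `t^r` is `(-1)^r ∏_{k=0}^{r-1}(m+k(m+1))` times the
coefficient of `z^{r(m+1)+m-1}` in `h`. -/
theorem higher_residue_Am (m : ℕ) (hm : 1 ≤ m) (h : Polynomial ℂ) :
    (PowerSeries.mk fun r : ℕ =>
        (-1 : ℂ) ^ r * mulZinv m ((lderiv ∘ mulZinv m)^[r] (lcoeff h)) (-1)) =
    (PowerSeries.mk fun r : ℕ =>
        (-1 : ℂ) ^ r * (∏ k ∈ Finset.range r, ((m : ℂ) + k * (m + 1))) *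
          h.coeff (r * (m + 1) + m - 1)) := by
  apply PowerSeries.ext
  intro r
  simp only [PowerSeries.coeff_mk]
  have key := iter_eq m r (lcoeff h) (-1 + m)
  have hmul : mulZinv m ((lderiv ∘ mulZinv m)^[r] (lcoeff h)) (-1)
      = ((lderiv ∘ mulZinv m)^[r] (lcoeff h)) (-1 + m) := rfl
  have harg : (-1 + (m : ℤ) + r * ((m : ℤ) + 1)) = ((r * (m + 1) + m - 1 : ℕ) : ℤ) := by
    rw [Nat.cast_sub (hm.trans (Nat.le_add_left m _))]
    push_cast
    ring
  have hl : lcoeff h ((r * (m + 1) + m - 1 : ℕ) : ℤ) = h.coeff (r * (m + 1) + m - 1) := by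
    simp [lcoeff]
  rw [hmul, key]
  push_cast
  rw [harg, hl]
  have hprod : (∏ k ∈ Finset.range r, (-1 + (m : ℂ) + 1 + (k : ℂ) * ((m : ℂ) + 1)))
      = ∏ k ∈ Finset.range r, ((m : ℂ) + k * (m + 1)) :=
    Finset.prod_congr rfl (fun k _ => by ring)
  rw [hprod]
  ring
end

section
/- Define g(σ) = 1 + ∑_{r≥1} (-1)^r σ^{3r} ∏_{j=1}^r (3j-2)^3 / (3r)! and h(σ) = σ + ∑_{r≥1} (-1)^r σ^{3r+1} ∏_{j=1}^r (3j-1)^3 / (3r+1)!. Then both g and h are formal power series solutions of the Picard–Fuchs equation (1+σ^3) ν'' + 3σ^2 ν' + σ ν = 0. -/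
open PowerSeries

private lemma coeff_derivativeFun_aux (f : PowerSeries ℂ) (n : ℕ) :
    coeff n (derivativeFun f) = coeff (n + 1) f * (n + 1) :=
  coeff_derivative f n

private lemma aux (a : ℕ → ℂ) (h2 : a 2 = 0)
    (hrec : ∀ m : ℕ, ((m:ℂ)+2)*((m:ℂ)+3) * a (m+3) + ((m:ℂ)+1)^2 * a m = 0) :
    (1 + X ^ 3) * derivativeFun (derivativeFun (mk a)) + 3 * X ^ 2 * derivativeFun (mk a)
        + X * mk a = 0 := by
  have key : (1 + X ^ 3) * derivativeFun (derivativeFun (mk a)) + 3 * X ^ 2 * derivativeFun (mk a)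
      + X * mk a
      = derivativeFun (derivativeFun (mk a)) + derivativeFun (derivativeFun (mk a)) * X ^ 3
        + (C (3:ℂ)) * (derivativeFun (mk a) * X ^ 2) + mk a * X ^ 1 := by
    rw [show (3 : PowerSeries ℂ) = C (3:ℂ) from (map_ofNat (C (R := ℂ)) 3).symm]; ring
  rw [key]
  ext n
  simp only [map_add, coeff_mul_X_pow', coeff_derivativeFun_aux, coeff_C_mul, coeff_mk,
    map_zero, coeff_zero_eq_constantCoeff]
  match n with
  | 0 => simp [h2]
  | 1 =>
    norm_num
    have h := hrec 0; norm_num at h; linear_combination h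
  | 2 =>
    norm_num
    have h := hrec 1; norm_num at h; linear_combination h
  | (k+3) =>
    norm_num
    have e1 : k+3+1+1 = k+5 := by omega
    have e2 : k+1+1 = k+2 := by omega
    have e3 : k+3-2+1 = k+2 := by omega
    rw [e1, e2, e3]
    have h := hrec (k+2)
    push_cast at h ⊢
    linear_combination h

/-- The power series `g(σ) = 1 + ∑_{r≥1} (-1)^r σ^{3r} ∏_{j=1}^r (3j-2)^3 / (3r)!`. -/
noncomputable def gSeries : PowerSeries ℂ :=
  PowerSeries.mk fun n =>
    if n % 3 = 0 then
      (-1 : ℂ) ^ (n / 3) * (∏ j ∈ Finset.range (n / 3), ((3 * (j + 1) - 2 : ℕ) : ℂ) ^ 3)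
        / (Nat.factorial n : ℂ)
    else 0

/-- The power series `h(σ) = σ + ∑_{r≥1} (-1)^r σ^{3r+1} ∏_{j=1}^r (3j-1)^3 / (3r+1)!`. -/
noncomputable def hSeries : PowerSeries ℂ :=
  PowerSeries.mk fun n =>
    if n % 3 = 1 then
      (-1 : ℂ) ^ (n / 3) * (∏ j ∈ Finset.range (n / 3), ((3 * (j + 1) - 1 : ℕ) : ℂ) ^ 3)
        / (Nat.factorial n : ℂ)
    else 0

/-- Both `g` and `h` are formal power series solutions of the Picard–Fuchs
equation `(1+σ^3)ν'' + 3σ^2 ν' + σ ν = 0`. -/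
theorem gSeries_hSeries_solve_picard_fuchs :
    (∀ ν : PowerSeries ℂ, ν = gSeries ∨ ν = hSeries →
      (1 + X ^ 3) * derivativeFun (derivativeFun ν) + 3 * X ^ 2 * derivativeFun ν
        + X * ν = 0) := by
  rintro ν (rfl|rfl)
  · rw [gSeries]
    apply aux
    · norm_num
    · intro m
      rcases (by omega : m % 3 = 0 ∨ m % 3 = 1 ∨ m % 3 = 2) with h|h|h
      · obtain ⟨r, rfl⟩ : ∃ r, m = 3*r := ⟨m/3, by omega⟩
        have e1 : (3*r+3) % 3 = 0 := by omega
        have e2 : (3*r+3) / 3 = r + 1 := by omega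
        have e3 : (3*r) % 3 = 0 := by omega
        have e4 : (3*r) / 3 = r := by omega
        simp only [e1, e2, e3, e4, if_pos, Finset.prod_range_succ]
        have e5 : (3*(r+1)-2 : ℕ) = 3*r+1 := by omega
        rw [e5]
        have hf : ((Nat.factorial (3*r+3) : ℂ)) =
            ((Nat.factorial (3*r) : ℂ)) * (3*(r:ℂ)+1) * (3*(r:ℂ)+2) * (3*(r:ℂ)+3) := by
          rw [show 3*r+3 = (3*r+2)+1 by omega, Nat.factorial_succ,
            show 3*r+2 = (3*r+1)+1 by omega, Nat.factorial_succ, Nat.factorial_succ]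
          push_cast; ring
        rw [hf]
        have hne : ((Nat.factorial (3*r) : ℂ)) ≠ 0 :=
          Nat.cast_ne_zero.mpr (Nat.factorial_ne_zero _)
        have hN : ∀ k : ℕ, k ≠ 0 → ((k:ℂ)) ≠ 0 := fun k hk => Nat.cast_ne_zero.mpr hk
        have h1 : (3*(r:ℂ)+1) ≠ 0 := by
          have := hN (3*r+1) (by omega); push_cast at this; exact this
        have h2 : (3*(r:ℂ)+2) ≠ 0 := by
          have := hN (3*r+2) (by omega); push_cast at this; exact this
        have h3 : (3*(r:ℂ)+3) ≠ 0 := by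
          have := hN (3*r+3) (by omega); push_cast at this; exact this
        field_simp [hne, h1, h2, h3]
        push_cast
        ring
      · have e1 : (m+3) % 3 = 1 := by omega
        simp [h, e1]
      · have e1 : (m+3) % 3 = 2 := by omega
        simp [h, e1]
  · rw [hSeries]
    apply aux
    · norm_num
    · intro m
      rcases (by omega : m % 3 = 0 ∨ m % 3 = 1 ∨ m % 3 = 2) with h|h|h
      · have e1 : (m+3) % 3 = 0 := by omega
        simp [h, e1]
      · obtain ⟨r, rfl⟩ : ∃ r, m = 3*r+1 := ⟨m/3, by omega⟩
        have e1 : (3*r+1+3) % 3 = 1 := by omega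
        have e2 : (3*r+1+3) / 3 = r + 1 := by omega
        have e3 : (3*r+1) % 3 = 1 := by omega
        have e4 : (3*r+1) / 3 = r := by omega
        simp only [e1, e2, e3, e4, if_pos, Finset.prod_range_succ]
        have e5 : (3*(r+1)-1 : ℕ) = 3*r+2 := by omega
        rw [e5]
        have hf : ((Nat.factorial (3*r+1+3) : ℂ)) =
            ((Nat.factorial (3*r+1) : ℂ)) * (3*(r:ℂ)+2) * (3*(r:ℂ)+3) * (3*(r:ℂ)+4) := by
          rw [show 3*r+1+3 = (3*r+3)+1 by omega, Nat.factorial_succ,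
            show 3*r+3 = (3*r+2)+1 by omega, Nat.factorial_succ,
            show 3*r+2 = (3*r+1)+1 by omega, Nat.factorial_succ]
          push_cast; ring
        rw [hf]
        have hne : ((Nat.factorial (3*r+1) : ℂ)) ≠ 0 :=
          Nat.cast_ne_zero.mpr (Nat.factorial_ne_zero _)
        have hN : ∀ k : ℕ, k ≠ 0 → ((k:ℂ)) ≠ 0 := fun k hk => Nat.cast_ne_zero.mpr hk
        have h1 : (3*(r:ℂ)+2) ≠ 0 := by
          have := hN (3*r+2) (by omega); push_cast at this; exact this
        have h2 : (3*(r:ℂ)+3) ≠ 0 := by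
          have := hN (3*r+3) (by omega); push_cast at this; exact this
        have h3 : (3*(r:ℂ)+4) ≠ 0 := by
          have := hN (3*r+4) (by omega); push_cast at this; exact this
        field_simp [hne, h1, h2, h3]
        push_cast
        ring
      · have e1 : (m+3) % 3 = 2 := by omega
        simp [h, e1]
end

section
/- Let V be a ℂ((t))-vector space of finite dimension over ℂ((t)), let H_0 ⊂ V be a free ℂ[[t]]-lattice with V = H_0 ⊗_{ℂ[[t]]} ℂ((t)), and let L ⊂ V be a ℂ-subspace with V = H_0 ⊕ L and t^{-1}L ⊆ L. Set B := H_0 ∩ tL. Then H_0 = B[[t]] (i.e. H_0 equals the ℂ[[t]]-span of B), L = t^{-1}B[t^{-1}], and V = B((t)); in particular, the projection B → H_0/tH_0 is an isomorphism of ℂ-vector spaces. -/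
open HahnSeries Submodule

set_option linter.unusedSectionVars false
set_option maxHeartbeats 1000000

namespace OppFilt

noncomputable section

variable {V : Type*} [AddCommGroup V]
    [Module (LaurentSeries ℂ) V]
    [Module (PowerSeries ℂ) V] [Module ℂ V]
    [IsScalarTower (PowerSeries ℂ) (LaurentSeries ℂ) V]
    [IsScalarTower ℂ (LaurentSeries ℂ) V]
    [IsScalarTower ℂ (PowerSeries ℂ) V]

local notation "τ" => (single (1:ℤ) (1:ℂ) : LaurentSeries ℂ)
local notation "σ" => (single (-1:ℤ) (1:ℂ) : LaurentSeries ℂ)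

theorem tau_sigma : τ * σ = 1 := by rw [single_mul_single]; norm_num
theorem sigma_tau : σ * τ = 1 := by rw [single_mul_single]; norm_num

theorem tau_sigma_smul (x : V) : τ • σ • x = x := by
  rw [← mul_smul, tau_sigma, one_smul]
theorem sigma_tau_smul (x : V) : σ • τ • x = x := by
  rw [← mul_smul, sigma_tau, one_smul]

theorem pseries_smul (f : PowerSeries ℂ) (x : V) :
    f • x = (HahnSeries.ofPowerSeries ℤ ℂ f) • x := by
  rw [← IsScalarTower.algebraMap_smul (LaurentSeries ℂ) f x, LaurentSeries.coe_algebraMap]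

theorem X_smul (x : V) : (PowerSeries.X : PowerSeries ℂ) • x = τ • x := by
  rw [pseries_smul]; congr 1; exact HahnSeries.ofPowerSeries_X

theorem X_pow_smul (n : ℕ) (x : V) :
    (PowerSeries.X ^ n : PowerSeries ℂ) • x = (single (n : ℤ) (1:ℂ) : LaurentSeries ℂ) • x := by
  rw [pseries_smul]; congr 1; exact HahnSeries.ofPowerSeries_X_pow n

/-- `ℂ`-scalars expressed as Laurent scalars. -/
theorem c_smul_l (a : ℂ) (x : V) : a • x = (single (0:ℤ) a : LaurentSeries ℂ) • x := by
  have h1 : a • (1 : LaurentSeries ℂ) = single (0:ℤ) a := by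
    ext n; simp [HahnSeries.coeff_single]
  rw [← h1, smul_assoc, one_smul]

theorem c_smul (a : ℂ) (x : V) : (PowerSeries.C a) • x = a • x :=
  IsScalarTower.algebraMap_smul (PowerSeries ℂ) a x

theorem c_smul_comm (a : ℂ) (f : LaurentSeries ℂ) (x : V) : a • f • x = f • a • x := by
  rw [c_smul_l a x, c_smul_l a (f • x), ← mul_smul, ← mul_smul, mul_comm]

theorem ps_smul_comm (g : PowerSeries ℂ) (f : LaurentSeries ℂ) (x : V) :
    g • f • x = f • g • x := by
  rw [pseries_smul, ← mul_smul, pseries_smul g x, ← mul_smul, mul_comm]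

theorem c_smul_comm_ps (a : ℂ) (g : PowerSeries ℂ) (x : V) : a • g • x = g • a • x := by
  rw [← c_smul a x, ← c_smul a (g • x), ← mul_smul, ← mul_smul, mul_comm]


/-- the multiplication-by-t map, as in the theorem statement -/
def tmulMap (V : Type*) [AddCommGroup V] [Module (LaurentSeries ℂ) V] [Module ℂ V]
    [IsScalarTower ℂ (LaurentSeries ℂ) V] : V →ₗ[ℂ] V :=
  (LinearMap.lsmul (LaurentSeries ℂ) V τ).restrictScalars ℂ

theorem tmulMap_apply (x : V) : tmulMap V x = τ • x := rfl

variable (H0 : Submodule (PowerSeries ℂ) V) (L : Submodule ℂ V)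

theorem tau_smul_mem {x : V} (hx : x ∈ H0) : τ • x ∈ H0 := by
  rw [← X_smul]; exact H0.smul_mem _ hx

theorem supA (hsup : H0.restrictScalars ℂ ⊔ L = ⊤) :
    (H0.restrictScalars ℂ ⊓ L.map (tmulMap V)) ⊔ (H0.restrictScalars ℂ).map (tmulMap V)
      = H0.restrictScalars ℂ := by
  apply le_antisymm
  · apply sup_le inf_le_left
    rintro _ ⟨h, hh, rfl⟩
    exact tau_smul_mem H0 hh
  · intro x hx
    have hmem : σ • x ∈ H0.restrictScalars ℂ ⊔ L := by rw [hsup]; trivial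
    obtain ⟨h, hh, l, hl, hsum⟩ := mem_sup.mp hmem
    have hx' : x = τ • h + τ • l := by
      rw [← smul_add, hsum, tau_sigma_smul]
    have hτl : τ • l ∈ H0 := by
      have : τ • l = x - τ • h := by rw [hx', add_sub_cancel_left]
      rw [this]
      exact sub_mem hx (tau_smul_mem H0 hh)
    refine mem_sup.mpr ⟨τ • l, ⟨hτl, ⟨l, hl, rfl⟩⟩, τ • h, ⟨h, hh, rfl⟩, ?_⟩
    rw [hx']
    exact add_comm _ _

theorem infA (hinf : H0.restrictScalars ℂ ⊓ L = ⊥) :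
    (H0.restrictScalars ℂ ⊓ L.map (tmulMap V)) ⊓ (H0.restrictScalars ℂ).map (tmulMap V)
      = ⊥ := by
  rw [eq_bot_iff]
  rintro x ⟨⟨hxH, l, hl, rfl⟩, h, hh, heq⟩
  have : l = h := by
    have := congrArg (fun y => σ • y) heq
    simpa only [tmulMap_apply, sigma_tau_smul] using this.symm
  subst this
  have : l ∈ H0.restrictScalars ℂ ⊓ L := ⟨hh, hl⟩
  rw [hinf] at this
  simp only [Submodule.mem_bot] at this
  subst this
  simp [tmulMap_apply]


theorem separated {ι : Type*} (bas : Module.Basis ι (PowerSeries ℂ) H0) {y : V} (hy : y ∈ H0)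
    (hdiv : ∀ N : ℕ, ∃ h ∈ H0, y = (PowerSeries.X ^ N : PowerSeries ℂ) • h) : y = 0 := by
  set Y : H0 := ⟨y, hy⟩ with hY
  have key : ∀ N : ℕ, ∃ H : H0, Y = (PowerSeries.X ^ N : PowerSeries ℂ) • H := by
    intro N
    obtain ⟨h, hh, he⟩ := hdiv N
    exact ⟨⟨h, hh⟩, Subtype.ext (by simpa using he)⟩
  have hcoeff : ∀ (i : ι) (m : ℕ), PowerSeries.coeff m (bas.repr Y i) = 0 := by
    intro i m
    obtain ⟨H, hH⟩ := key (m + 1)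
    have : bas.repr Y i = PowerSeries.X ^ (m + 1) * bas.repr H i := by
      rw [hH, map_smul, Finsupp.smul_apply, smul_eq_mul]
    rw [this, PowerSeries.coeff_X_pow_mul', if_neg (by omega)]
  have hrepr : bas.repr Y = 0 := by
    apply Finsupp.ext; intro i
    apply PowerSeries.ext; intro m
    simp [hcoeff i m]
  have : Y = 0 := by
    have := congrArg bas.repr.symm hrepr
    simpa using this
  simpa [hY] using congrArg Subtype.val this

theorem finite_basis_index [FiniteDimensional (LaurentSeries ℂ) V]
    {ι : Type*} (bas : Module.Basis ι (PowerSeries ℂ) H0) : Finite ι := by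
  have li0 : LinearIndependent (PowerSeries ℂ) (H0.subtype ∘ bas) :=
    bas.linearIndependent.map' H0.subtype (Submodule.ker_subtype H0)
  have li : LinearIndependent (LaurentSeries ℂ) (H0.subtype ∘ bas) :=
    li0.localization (LaurentSeries ℂ) (Submonoid.powers (PowerSeries.X : PowerSeries ℂ))
  exact li.finite

theorem span_range_basis {ι : Type*} (bas : Module.Basis ι (PowerSeries ℂ) H0) :
    Submodule.span (PowerSeries ℂ) (Set.range fun i => (bas i : V)) = H0 := by
  have := congrArg (Submodule.map H0.subtype) bas.span_eq
  rwa [Submodule.map_span, Submodule.map_subtype_top, ← Set.range_comp] at this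


theorem span_B [FiniteDimensional (LaurentSeries ℂ) V] [Module.Free (PowerSeries ℂ) H0]
    (hsup : H0.restrictScalars ℂ ⊔ L = ⊤) :
    H0 = Submodule.span (PowerSeries ℂ)
      ((H0.restrictScalars ℂ ⊓ L.map (tmulMap V) : Submodule ℂ V) : Set V) := by
  classical
  set B : Submodule ℂ V := H0.restrictScalars ℂ ⊓ L.map (tmulMap V) with hB
  have hBH0 : ∀ x ∈ B, x ∈ H0 := fun x hx => hx.1
  apply le_antisymm ?_ (Submodule.span_le.mpr hBH0)
  -- get a finite basis
  obtain ⟨⟨ι, bas⟩⟩ := Module.Free.exists_basis (R := PowerSeries ℂ) (M := H0)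
  have : Finite ι := finite_basis_index H0 bas
  cases nonempty_fintype ι
  have hsupA := supA H0 L hsup
  -- decompose basis vectors
  have he : ∀ i : ι, ∃ b ∈ B, ∃ h ∈ H0, (bas i : V) = b + (single (1:ℤ) (1:ℂ) : LaurentSeries ℂ) • h := by
    intro i
    have hmem : (bas i : V) ∈ B ⊔ (H0.restrictScalars ℂ).map (tmulMap V) := by
      rw [hsupA]; exact (bas i).2
    obtain ⟨b, hb, u, ⟨h, hh, rfl⟩, hsum⟩ := mem_sup.mp hmem
    exact ⟨b, hb, h, hh, hsum.symm⟩
  choose β hβB h1 hh1 hdecomp using he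
  have hβH0 : ∀ i, β i ∈ H0 := fun i => (hβB i).1
  -- claim D
  have claimD : ∀ x ∈ H0, ∃ (c : ι → ℂ) (h : V), h ∈ H0 ∧
      x = (∑ i, c i • β i) + (single (1:ℤ) (1:ℂ) : LaurentSeries ℂ) • h := by
    have hspan := span_range_basis H0 bas
    intro x hx
    rw [← hspan] at hx
    induction hx using Submodule.span_induction with
    | mem x hmem =>
      obtain ⟨i, rfl⟩ := hmem
      refine ⟨fun j => if j = i then 1 else 0, h1 i, hh1 i, ?_⟩
      simp only [ite_smul, one_smul, zero_smul, Finset.sum_ite_eq', Finset.mem_univ, if_true]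
      exact hdecomp i
    | zero => exact ⟨0, 0, zero_mem _, by simp⟩
    | add x y hx hy ihx ihy =>
      obtain ⟨c, h, hh, hxe⟩ := ihx
      obtain ⟨c', h', hh', hye⟩ := ihy
      refine ⟨c + c', h + h', add_mem hh hh', ?_⟩
      rw [hxe, hye, smul_add]
      rw [show (∑ i, (c + c') i • β i) = (∑ i, c i • β i) + ∑ i, c' i • β i by
        rw [← Finset.sum_add_distrib]; exact Finset.sum_congr rfl fun i _ => by
          simp [add_smul]]
      abel
    | smul f x hxmem ih =>
      obtain ⟨c, h, hh, hxe⟩ := ih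
      have hxH0 : x ∈ H0 := by rw [← hspan]; exact hxmem
      set a := PowerSeries.constantCoeff f with ha
      set g := PowerSeries.mk fun n => PowerSeries.coeff (n + 1) f with hg
      have hf : f = PowerSeries.X * g + PowerSeries.C a := PowerSeries.eq_X_mul_shift_add_const f
      refine ⟨fun i => a * c i, g • x + a • h, ?_, ?_⟩
      · refine add_mem (H0.smul_mem _ hxH0) ?_
        rw [← c_smul a h]
        exact H0.smul_mem _ hh
      · have h2 : a • ((single (1:ℤ) (1:ℂ) : LaurentSeries ℂ) • h)
            = (single (1:ℤ) (1:ℂ) : LaurentSeries ℂ) • (a • h) := c_smul_comm a _ h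
        have h3 : a • (∑ i, c i • β i) = ∑ i, (a * c i) • β i := by
          rw [Finset.smul_sum]; exact Finset.sum_congr rfl fun i _ => (mul_smul a (c i) (β i)).symm
        show f • x = (∑ i, (a * c i) • β i)
          + (single (1:ℤ) (1:ℂ) : LaurentSeries ℂ) • (g • x + a • h)
        rw [hf, add_smul, mul_smul, X_smul, c_smul, hxe, smul_add a, h3, h2,
          smul_add ((single (1:ℤ) (1:ℂ)) : LaurentSeries ℂ) _ (a • h)]
        abel
  -- the recursion
  intro x hx
  have claimD' : ∀ y : H0, ∃ (c : ι → ℂ) (h : H0), (y : V)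
      = (∑ i, c i • β i) + (single (1:ℤ) (1:ℂ) : LaurentSeries ℂ) • (h : V) := by
    intro y
    obtain ⟨c, h, hh, he⟩ := claimD y y.2
    exact ⟨c, ⟨h, hh⟩, he⟩
  choose cf nxt hnxt using claimD'
  set seq : ℕ → H0 := fun k => Nat.rec ⟨x, hx⟩ (fun _ y => nxt y) k with hseqdef
  have hseq : ∀ k, ((seq k : H0) : V)
      = (∑ i, cf (seq k) i • β i) + (single (1:ℤ) (1:ℂ) : LaurentSeries ℂ) • ((seq (k+1) : H0) : V) :=
    fun k => hnxt (seq k)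
  set c : ℕ → ι → ℂ := fun k => cf (seq k) with hc
  set f : ι → PowerSeries ℂ := fun i => PowerSeries.mk fun k => c k i with hfdef
  set g : ℕ → ι → PowerSeries ℂ := fun N i => PowerSeries.mk fun m => c (m + N) i with hgdef
  have hg0 : ∀ i, g 0 i = f i := by
    intro i; apply PowerSeries.ext; intro m; simp [hgdef, hfdef]
  have hgsucc : ∀ N i, g N i = PowerSeries.X * g (N+1) i + PowerSeries.C (c N i) := by
    intro N i
    apply PowerSeries.ext; intro m
    cases m with
    | zero => simp [hgdef, PowerSeries.coeff_zero_X_mul]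
    | succ m =>
      simp only [hgdef, map_add, PowerSeries.coeff_succ_X_mul, PowerSeries.coeff_mk,
        PowerSeries.coeff_C, Nat.succ_ne_zero, if_false, add_zero,
        show m + 1 + N = m + (N + 1) from by omega]
  have key : ∀ N : ℕ, x - ∑ i, f i • β i
      = (PowerSeries.X ^ N : PowerSeries ℂ) • (((seq N : H0) : V) - ∑ i, g N i • β i) := by
    intro N
    induction N with
    | zero =>
      have h0 : ((seq 0 : H0) : V) = x := rfl
      rw [pow_zero, one_smul, h0,
        show (∑ i, g 0 i • β i) = ∑ i, f i • β i from
          Finset.sum_congr rfl fun i _ => by rw [hg0]]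
    | succ N ih =>
      rw [ih]
      have hstep : ((seq N : H0) : V) - ∑ i, g N i • β i
          = (PowerSeries.X : PowerSeries ℂ) • (((seq (N+1) : H0) : V) - ∑ i, g (N+1) i • β i) := by
        rw [hseq N, smul_sub, Finset.smul_sum]
        have : ∀ i, g N i • β i
            = (PowerSeries.X : PowerSeries ℂ) • (g (N+1) i • β i) + c N i • β i := by
          intro i
          rw [hgsucc N i, add_smul, mul_smul, c_smul]
        rw [Finset.sum_congr rfl fun i _ => this i, Finset.sum_add_distrib, X_smul]
        abel
      rw [hstep, ← mul_smul, ← pow_succ]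
  have hsub_mem : x - ∑ i, f i • β i ∈ H0 :=
    sub_mem hx (sum_mem fun i _ => H0.smul_mem _ (hβH0 i))
  have hy0 : x - ∑ i, f i • β i = 0 := by
    refine separated H0 bas hsub_mem fun N => ⟨((seq N : H0) : V) - ∑ i, g N i • β i, ?_, key N⟩
    exact sub_mem (seq N).2 (sum_mem fun i _ => H0.smul_mem _ (hβH0 i))
  have hxe : x = ∑ i, f i • β i := by rwa [sub_eq_zero] at hy0
  rw [hxe]
  exact sum_mem fun i _ => Submodule.smul_mem _ _ (Submodule.subset_span (hβB i))

theorem span_B_top [FiniteDimensional (LaurentSeries ℂ) V] [Module.Free (PowerSeries ℂ) H0]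
    (hlattice : Submodule.span (LaurentSeries ℂ) (H0 : Set V) = ⊤)
    (hsup : H0.restrictScalars ℂ ⊔ L = ⊤) :
    Submodule.span (LaurentSeries ℂ)
      ((H0.restrictScalars ℂ ⊓ L.map (tmulMap V) : Submodule ℂ V) : Set V) = ⊤ := by
  have h2 := span_B H0 L hsup
  rw [eq_top_iff, ← hlattice]
  apply Submodule.span_le.mpr
  intro x hx
  have hx' : x ∈ Submodule.span (PowerSeries ℂ)
      ((H0.restrictScalars ℂ ⊓ L.map (tmulMap V) : Submodule ℂ V) : Set V) := h2 ▸ hx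
  exact Submodule.span_subset_span (PowerSeries ℂ) (LaurentSeries ℂ) _ hx'

theorem L_eq [FiniteDimensional (LaurentSeries ℂ) V] [Module.Free (PowerSeries ℂ) H0]
    (hlattice : Submodule.span (LaurentSeries ℂ) (H0 : Set V) = ⊤)
    (hsup : H0.restrictScalars ℂ ⊔ L = ⊤)
    (hinf : H0.restrictScalars ℂ ⊓ L = ⊥)
    (hL : ∀ x ∈ L, (single (-1 : ℤ) (1 : ℂ) : LaurentSeries ℂ) • x ∈ L) :
    L = Submodule.span ℂ {x : V | ∃ (k : ℕ) (b : V),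
        b ∈ (H0.restrictScalars ℂ ⊓ L.map (tmulMap V) : Submodule ℂ V) ∧
        x = (single (-(k : ℤ) - 1) (1 : ℂ) : LaurentSeries ℂ) • b} := by
  set B : Submodule ℂ V := H0.restrictScalars ℂ ⊓ L.map (tmulMap V) with hB
  set S : Set V := {x : V | ∃ (k : ℕ) (b : V), b ∈ B ∧
      x = (single (-(k : ℤ) - 1) (1 : ℂ) : LaurentSeries ℂ) • b} with hS
  set L' : Submodule ℂ V := Submodule.span ℂ S with hL'
  have hsupA := supA H0 L hsup
  -- generators lie in L
  have hLneg : ∀ (k : ℕ), ∀ l ∈ L, (single (-(k : ℤ)) (1:ℂ) : LaurentSeries ℂ) • l ∈ L := by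
    intro k
    induction k with
    | zero =>
      intro l hl
      have h0 : (-(0:ℕ) : ℤ) = 0 := by norm_num
      rw [h0, single_zero_one, one_smul]
      exact hl
    | succ k ih =>
      intro l hl
      have : (single (-((k+1) : ℕ)  : ℤ) (1:ℂ) : LaurentSeries ℂ)
          = (single (-1 : ℤ) (1:ℂ) : LaurentSeries ℂ) * single (-(k : ℤ)) (1:ℂ) := by
        rw [single_mul_single, mul_one]
        congr 1
        push_cast
        ring_nf
      rw [this, mul_smul]
      exact hL _ (ih l hl)
  have hSL : S ⊆ L := by
    rintro x ⟨k, b, hb, rfl⟩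
    obtain ⟨l, hl, hbl⟩ := hb.2
    rw [← hbl, tmulMap_apply, ← mul_smul, single_mul_single, mul_one]
    have h1 : (-(k:ℤ) - 1 + 1) = -(k : ℤ) := by ring
    rw [h1]
    exact hLneg k l hl
  have hL'L : L' ≤ L := Submodule.span_le.mpr hSL
  have hgen : ∀ (k : ℕ) (b : V), b ∈ B →
      (single (-(k : ℤ) - 1) (1:ℂ) : LaurentSeries ℂ) • b ∈ L' :=
    fun k b hb => Submodule.subset_span ⟨k, b, hb, rfl⟩
  set M : Submodule ℂ V := H0.restrictScalars ℂ ⊔ L' with hM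
  have hH0M : ∀ x ∈ H0, x ∈ M := fun x hx => Submodule.mem_sup_left hx
  have hL'M : L' ≤ M := le_sup_right
  -- sigma stability
  have hσM : ∀ x ∈ M, (single (-1 : ℤ) (1:ℂ) : LaurentSeries ℂ) • x ∈ M := by
    have : M ≤ M.comap ((LinearMap.lsmul (LaurentSeries ℂ) V
        (single (-1 : ℤ) (1:ℂ) : LaurentSeries ℂ)).restrictScalars ℂ) := by
      rw [hM]
      apply sup_le
      · intro x hx
        have hx' : x ∈ B ⊔ (H0.restrictScalars ℂ).map (tmulMap V) := by rw [hsupA]; exact hx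
        obtain ⟨b, hb, u, ⟨h, hh, rfl⟩, hsum⟩ := mem_sup.mp hx'
        simp only [Submodule.mem_comap, LinearMap.coe_restrictScalars, LinearMap.lsmul_apply]
        have heq : (single (-1 : ℤ) (1:ℂ) : LaurentSeries ℂ) • x
            = (single (-1 : ℤ) (1:ℂ) : LaurentSeries ℂ) • b + h := by
          rw [← hsum, smul_add, tmulMap_apply, sigma_tau_smul]
        rw [heq]
        refine add_mem (Submodule.mem_sup_right ?_) (hH0M h hh)
        have := hgen 0 b hb
        rwa [show (-(0:ℕ):ℤ) - 1 = -1 by norm_num] at this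
      · apply Submodule.span_le.mpr
        rintro x ⟨k, b, hb, rfl⟩
        simp only [SetLike.mem_coe, Submodule.mem_comap, LinearMap.coe_restrictScalars,
          LinearMap.lsmul_apply]
        rw [← mul_smul, single_mul_single, one_mul]
        have h1 : (-1 + (-(k:ℤ) - 1)) = -((k+1 : ℕ) : ℤ) - 1 := by push_cast; ring
        rw [h1]
        exact Submodule.mem_sup_right (hgen (k+1) b hb)
    intro x hx
    exact this hx
  -- power series stability
  have genT : ∀ (k : ℕ) (gP : PowerSeries ℂ) (b : V), b ∈ B →
      gP • ((single (-(k : ℤ) - 1) (1:ℂ) : LaurentSeries ℂ) • b) ∈ M := by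
    intro k
    induction k with
    | zero =>
      intro gP b hb
      set a := PowerSeries.constantCoeff gP
      set g' := PowerSeries.mk fun n => PowerSeries.coeff (n + 1) gP
      have hf : gP = PowerSeries.X * g' + PowerSeries.C a :=
        PowerSeries.eq_X_mul_shift_add_const gP
      rw [hf, add_smul, mul_smul, X_smul, c_smul]
      refine add_mem ?_ (hL'M (Submodule.smul_mem _ a (hgen 0 b hb)))
      rw [ps_smul_comm]
      have h0 : (-(0:ℕ) : ℤ) - 1 = -1 := by norm_num
      rw [h0, tau_sigma_smul]
      exact hH0M _ (H0.smul_mem g' hb.1)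
    | succ k ih =>
      intro gP b hb
      set a := PowerSeries.constantCoeff gP
      set g' := PowerSeries.mk fun n => PowerSeries.coeff (n + 1) gP
      have hf : gP = PowerSeries.X * g' + PowerSeries.C a :=
        PowerSeries.eq_X_mul_shift_add_const gP
      have hsplit : (single (-((k+1:ℕ) : ℤ) - 1) (1:ℂ) : LaurentSeries ℂ)
          = (single (-1 : ℤ) (1:ℂ) : LaurentSeries ℂ) * single (-(k : ℤ) - 1) (1:ℂ) := by
        rw [single_mul_single, mul_one]
        congr 1
        push_cast
        ring_nf
      rw [hf, add_smul, mul_smul, X_smul, c_smul]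
      refine add_mem ?_ (hL'M (Submodule.smul_mem _ a (hgen (k+1) b hb)))
      rw [hsplit, mul_smul, ps_smul_comm, tau_sigma_smul]
      exact ih g' b hb
  have hPM : ∀ (gP : PowerSeries ℂ), ∀ x ∈ M, gP • x ∈ M := by
    intro gP
    have : M ≤ M.comap ((LinearMap.lsmul (PowerSeries ℂ) V gP).restrictScalars ℂ) := by
      rw [hM]
      apply sup_le
      · intro x hx
        simp only [Submodule.mem_comap, LinearMap.coe_restrictScalars, LinearMap.lsmul_apply]
        exact hH0M _ (H0.smul_mem gP hx)
      · apply Submodule.span_le.mpr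
        rintro x ⟨k, b, hb, rfl⟩
        simp only [SetLike.mem_coe, Submodule.mem_comap, LinearMap.coe_restrictScalars,
          LinearMap.lsmul_apply]
        exact genT k gP b hb
    intro x hx
    exact this hx
  -- sigma powers
  have hσpow : ∀ (n : ℕ), ∀ x ∈ M,
      ((single (-1 : ℤ) (1:ℂ) : LaurentSeries ℂ) ^ n) • x ∈ M := by
    intro n
    induction n with
    | zero => intro x hx; simpa using hx
    | succ n ih =>
      intro x hx
      rw [pow_succ, mul_smul]
      exact ih _ (hσM x hx)
  -- M is everything
  have hsub : ∀ x, x ∈ Submodule.span (LaurentSeries ℂ) (H0 : Set V) → x ∈ M := by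
    intro x hx
    induction hx using Submodule.span_induction with
    | mem x hmem => exact hH0M x hmem
    | zero => exact zero_mem M
    | add x y hx hy ihx ihy => exact add_mem ihx ihy
    | smul f x hxmem ih =>
      have hfd : f = (single f.order (1:ℂ) : LaurentSeries ℂ)
          * (HahnSeries.ofPowerSeries ℤ ℂ f.powerSeriesPart) :=
        (LaurentSeries.single_order_mul_powerSeriesPart f).symm
      rw [hfd, mul_smul, ← pseries_smul]
      have hin : f.powerSeriesPart • x ∈ M := hPM _ x ih
      rcases le_or_gt 0 f.order with ho | ho
      · rw [show (single f.order (1:ℂ) : LaurentSeries ℂ)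
            = single ((f.order.toNat : ℕ) : ℤ) (1:ℂ) by rw [Int.toNat_of_nonneg ho],
          ← X_pow_smul]
        exact hPM _ _ hin
      · rw [show (single f.order (1:ℂ) : LaurentSeries ℂ)
            = (single (-1 : ℤ) (1:ℂ) : LaurentSeries ℂ) ^ ((-f.order).toNat) by
          rw [single_pow, one_pow, nsmul_eq_mul, mul_neg_one,
            Int.toNat_of_nonneg (by omega), neg_neg]]
        exact hσpow _ _ hin
  have hMtop : M = ⊤ := by
    rw [eq_top_iff]
    intro x _
    exact hsub x (by rw [hlattice]; trivial)
  -- conclude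
  apply le_antisymm ?_ hL'L
  intro x hx
  have hxM : x ∈ M := by rw [hMtop]; trivial
  obtain ⟨h, hh, l', hl', hsum⟩ := mem_sup.mp hxM
  have hhL : h ∈ L := by
    have : h = x - l' := by rw [← hsum, add_sub_cancel_right]
    rw [this]
    exact sub_mem hx (hL'L hl')
  have : h ∈ H0.restrictScalars ℂ ⊓ L := ⟨hh, hhL⟩
  rw [hinf] at this
  simp only [Submodule.mem_bot] at this
  rw [← hsum, this, zero_add]
  exact hl'

end
end OppFilt



/-- Let `V` be a finite-dimensional `ℂ((t))`-vector space, `H₀ ⊂ V` a free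
`ℂ[[t]]`-lattice spanning `V` over `ℂ((t))`, and `L ⊂ V` a `ℂ`-subspace with
`V = H₀ ⊕ L` and `t⁻¹L ⊆ L`.  Set `B := H₀ ∩ tL`.  Then `H₀ = B[[t]]` (the
`ℂ[[t]]`-span of `B`), `V = B((t))` (the `ℂ((t))`-span of `B` is all of `V`),
`L = t⁻¹B[t⁻¹]`, and the projection `B → H₀/tH₀` is an isomorphism (expressed
as `B ⊔ tH₀ = H₀` and `B ⊓ tH₀ = ⊥`). -/
theorem opposite_filtration_structure
    (V : Type*) [AddCommGroup V]
    [Module (LaurentSeries ℂ) V] [FiniteDimensional (LaurentSeries ℂ) V]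
    [Module (PowerSeries ℂ) V] [Module ℂ V]
    [IsScalarTower (PowerSeries ℂ) (LaurentSeries ℂ) V]
    [IsScalarTower ℂ (LaurentSeries ℂ) V]
    [IsScalarTower ℂ (PowerSeries ℂ) V]
    (H0 : Submodule (PowerSeries ℂ) V) [Module.Free (PowerSeries ℂ) H0]
    (hlattice : Submodule.span (LaurentSeries ℂ) (H0 : Set V) = ⊤)
    (L : Submodule ℂ V)
    (hsup : H0.restrictScalars ℂ ⊔ L = ⊤)
    (hinf : H0.restrictScalars ℂ ⊓ L = ⊥)
    (hL : ∀ x ∈ L,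
      (HahnSeries.single (-1 : ℤ) (1 : ℂ) : LaurentSeries ℂ) • x ∈ L) :
    let tmul : V →ₗ[ℂ] V :=
      (LinearMap.lsmul (LaurentSeries ℂ) V
        (HahnSeries.single (1 : ℤ) (1 : ℂ) : LaurentSeries ℂ)).restrictScalars ℂ
    let B : Submodule ℂ V := H0.restrictScalars ℂ ⊓ L.map tmul
    H0 = Submodule.span (PowerSeries ℂ) (B : Set V) ∧
    Submodule.span (LaurentSeries ℂ) (B : Set V) = ⊤ ∧
    L = Submodule.span ℂ {x : V | ∃ (k : ℕ) (b : V), b ∈ B ∧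
          x = (HahnSeries.single (-(k : ℤ) - 1) (1 : ℂ) : LaurentSeries ℂ) • b} ∧
    B ⊔ (H0.restrictScalars ℂ).map tmul = H0.restrictScalars ℂ ∧
    B ⊓ (H0.restrictScalars ℂ).map tmul = ⊥ := by
  intro tmul B
  exact ⟨OppFilt.span_B H0 L hsup, OppFilt.span_B_top H0 L hlattice hsup,
    OppFilt.L_eq H0 L hlattice hsup hinf hL, OppFilt.supA H0 L hsup, OppFilt.infA H0 L hinf⟩
end

section
/- Let V = B((t)) for a finite-dimensional ℂ-vector space B, with lattice H_0 = B[[t]] and L = t^{-1}B[t^{-1}], and let K : V × V → ℂ((t)) be a sesquilinear pairing satisfying K(ν(t)s, s') = ν(t)K(s,s'), K(s, ν(t)s') = ν(−t)K(s,s'), and K(H_0, H_0) ⊆ ℂ[[t]]. Then the following are equivalent: (i) ω(L, L) = 0 where ω(a,b) := Res_{t=0} K(a,b)dt; (ii) K(L, L) ⊆ t^{-2}ℂ[t^{-1}]; (iii) K(B, B) ⊆ ℂ. -/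
/-- The involution `ν(t) ↦ ν(−t)` on Laurent series. -/
noncomputable def lbar (f : LaurentSeries ℂ) : LaurentSeries ℂ :=
  ⟨fun n => (-1 : ℂ) ^ n * f.coeff n,
    f.isPWO_support'.mono (by
      intro n hn
      simp only [Function.mem_support] at hn ⊢
      intro h
      exact hn (by rw [h, mul_zero]))⟩

lemma lbar_coeff (f : LaurentSeries ℂ) (n : ℤ) :
    (lbar f).coeff n = (-1:ℂ)^n * f.coeff n := rfl

lemma lbar_single (k : ℤ) (c : ℂ) :
    lbar (HahnSeries.single k c) = HahnSeries.single k ((-1:ℂ)^k * c) := by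
  ext n
  rw [lbar_coeff]
  by_cases h : n = k
  · subst h; simp
  · simp [HahnSeries.coeff_single_of_ne h]

lemma single_mul_coeff (k m : ℤ) (c : ℂ) (f : LaurentSeries ℂ) :
    ((HahnSeries.single k c) * f).coeff m = c * f.coeff (m - k) := by
  have h := HahnSeries.coeff_single_mul_add (r := c) (x := f) (a := m - k) (b := k)
  rw [sub_add_cancel] at h
  exact h

lemma fin_supp (f : LaurentSeries ℂ) (hf : ∀ n : ℤ, 0 ≤ n → f.coeff n = 0) :
    f.support.Finite := by
  rcases eq_or_ne f 0 with rfl | h0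
  · simp
  · have hwf := f.isWF_support
    have hne : f.support.Nonempty := HahnSeries.support_nonempty_iff.2 h0
    refine Set.Finite.subset (Set.finite_Icc (hwf.min hne) (-1)) ?_
    intro n hn
    refine ⟨hwf.min_le hne hn, ?_⟩
    by_contra h
    exact hn (hf n (by omega))

lemma sum_single (f : LaurentSeries ℂ) (s : Finset ℤ) (hs : f.support ⊆ ↑s) :
    f = ∑ n ∈ s, HahnSeries.single n (f.coeff n) := by
  ext m
  have : (∑ n ∈ s, HahnSeries.single n (f.coeff n)).coeff m
      = ∑ n ∈ s, (HahnSeries.single n (f.coeff n)).coeff m :=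
    map_sum (HahnSeries.coeff.addMonoidHom m) _ s
  rw [this, Finset.sum_eq_single m]
  · simp
  · intro b _ hb; exact HahnSeries.coeff_single_of_ne (Ne.symm hb)
  · intro hm
    simp only [HahnSeries.coeff_single_same]
    by_contra h
    exact hm (hs h)

lemma coeff_sum (s : Finset ℤ) (g : ℤ → LaurentSeries ℂ) (m : ℤ) :
    (∑ n ∈ s, g n).coeff m = ∑ n ∈ s, (g n).coeff m :=
  map_sum (HahnSeries.coeff.addMonoidHom m) _ s

/-- Let `V = B((t))` for `B = ℂ^d`, with lattice `H₀ = B[[t]]` and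
`L = t⁻¹B[t⁻¹]`, and let `K` be a sesquilinear pairing with values in `ℂ((t))`
satisfying `K(ν(t)s, s') = ν(t)K(s,s')`, `K(s, ν(t)s') = ν(−t)K(s,s')` and
`K(H₀, H₀) ⊆ ℂ[[t]]`.  Then the following are equivalent:
(i) `ω(L,L) = 0` where `ω(a,b) = Res_{t=0} K(a,b)dt`;
(ii) `K(L,L) ⊆ t⁻²ℂ[t⁻¹]`;
(iii) `K(B,B) ⊆ ℂ`. -/
theorem opposite_filtration_pairing_tfae (d : ℕ)
    (K : (Fin d → LaurentSeries ℂ) →ₗ[ℂ] (Fin d → LaurentSeries ℂ) →ₗ[ℂ]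
      LaurentSeries ℂ)
    (hKl : ∀ (ν : LaurentSeries ℂ) (s s' : Fin d → LaurentSeries ℂ),
      K (ν • s) s' = ν * K s s')
    (hKr : ∀ (ν : LaurentSeries ℂ) (s s' : Fin d → LaurentSeries ℂ),
      K s (ν • s') = lbar ν * K s s')
    (hH0 : ∀ s s' : Fin d → LaurentSeries ℂ,
      (∀ i, ∀ n : ℤ, n < 0 → (s i).coeff n = 0) →
      (∀ i, ∀ n : ℤ, n < 0 → (s' i).coeff n = 0) →
      ∀ n : ℤ, n < 0 → (K s s').coeff n = 0) :
    ((∀ a a' : Fin d → LaurentSeries ℂ,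
        (∀ i, ∀ n : ℤ, 0 ≤ n → (a i).coeff n = 0) →
        (∀ i, ∀ n : ℤ, 0 ≤ n → (a' i).coeff n = 0) →
        (K a a').coeff (-1) = 0) ↔
     (∀ a a' : Fin d → LaurentSeries ℂ,
        (∀ i, ∀ n : ℤ, 0 ≤ n → (a i).coeff n = 0) →
        (∀ i, ∀ n : ℤ, 0 ≤ n → (a' i).coeff n = 0) →
        ∀ n : ℤ, -1 ≤ n → (K a a').coeff n = 0)) ∧
    ((∀ a a' : Fin d → LaurentSeries ℂ,
        (∀ i, ∀ n : ℤ, 0 ≤ n → (a i).coeff n = 0) →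
        (∀ i, ∀ n : ℤ, 0 ≤ n → (a' i).coeff n = 0) →
        ∀ n : ℤ, -1 ≤ n → (K a a').coeff n = 0) ↔
     (∀ b b' : Fin d → LaurentSeries ℂ,
        (∀ i, ∀ n : ℤ, n ≠ 0 → (b i).coeff n = 0) →
        (∀ i, ∀ n : ℤ, n ≠ 0 → (b' i).coeff n = 0) →
        ∀ n : ℤ, n ≠ 0 → (K b b').coeff n = 0)) := by
  constructor
  · constructor
    · -- (i) → (ii)
      intro h a a' ha ha' n hn
      set ν : LaurentSeries ℂ := HahnSeries.single (-n-1) (1:ℂ) with hν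
      have h1 : (K (ν • a) a').coeff (-1) = 0 := by
        apply h _ _ _ ha'
        intro i m hm
        have : (ν • a) i = ν * a i := rfl
        rw [this, hν, single_mul_coeff]
        rw [ha i (m - (-n-1)) (by omega), mul_zero]
      rw [hKl, hν, single_mul_coeff] at h1
      have harith : (-1 : ℤ) - (-n-1) = n := by ring
      rw [harith] at h1
      simpa using h1
    · -- (ii) → (i)
      intro h a a' ha ha'
      exact h a a' ha ha' (-1) le_rfl
  · constructor
    · -- (ii) → (iii)
      intro hii b b' hb hb' n hn0
      rcases lt_or_gt_of_ne hn0 with hn | hn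
      · exact hH0 b b' (fun i m hm => hb i m (by omega))
          (fun i m hm => hb' i m (by omega)) n hn
      · -- n > 0
        set ν : LaurentSeries ℂ := HahnSeries.single (-1) (1:ℂ) with hν
        have hL : ∀ (c : Fin d → LaurentSeries ℂ),
            (∀ i, ∀ m : ℤ, m ≠ 0 → (c i).coeff m = 0) →
            (∀ i, ∀ m : ℤ, 0 ≤ m → ((ν • c) i).coeff m = 0) := by
          intro c hc i m hm
          have : (ν • c) i = ν * c i := rfl
          rw [this, hν, single_mul_coeff, hc i (m - (-1)) (by omega), mul_zero]
        have key : (K (ν • b) (ν • b')).coeff (n - 2) = 0 :=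
          hii _ _ (hL b hb) (hL b' hb') (n - 2) (by omega)
        rw [hKl, hKr, hν, lbar_single] at key
        rw [single_mul_coeff, single_mul_coeff] at key
        have hpow : ((-1:ℂ)^(-1:ℤ) * 1) = -1 := by norm_num
        rw [hpow] at key
        have harith : n - 2 - (-1) - (-1) = n := by ring
        rw [harith] at key
        simpa using key
    · -- (iii) → (ii)
      intro hiii a a' ha ha' n hn
      classical
      set S : Finset ℤ :=
        Finset.univ.biUnion (fun i => (fin_supp (a i) (ha i)).toFinset) with hS
      set S' : Finset ℤ :=
        Finset.univ.biUnion (fun i => (fin_supp (a' i) (ha' i)).toFinset) with hS'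
      set b : ℤ → (Fin d → LaurentSeries ℂ) :=
        fun k i => HahnSeries.single 0 ((a i).coeff k) with hb
      set b' : ℤ → (Fin d → LaurentSeries ℂ) :=
        fun k i => HahnSeries.single 0 ((a' i).coeff k) with hb'
      have hadec : a = ∑ k ∈ S, (HahnSeries.single k (1:ℂ)) • b k := by
        funext i
        have hsupp : (a i).support ⊆ ↑S := by
          intro m hm
          simp only [hS, Finset.coe_biUnion, Finset.coe_univ, Set.mem_iUnion]
          exact ⟨i, trivial, (fin_supp (a i) (ha i)).mem_toFinset.2 hm⟩
        calc a i = ∑ k ∈ S, HahnSeries.single k ((a i).coeff k) :=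
              sum_single (a i) S hsupp
          _ = ∑ k ∈ S, (HahnSeries.single k (1:ℂ)) • b k i := by
              refine Finset.sum_congr rfl fun k _ => ?_
              rw [hb, smul_eq_mul, HahnSeries.single_mul_single, add_zero, one_mul]
          _ = (∑ k ∈ S, (HahnSeries.single k (1:ℂ)) • b k) i := by
              simp only [Finset.sum_apply, Pi.smul_apply]
      have hadec' : a' = ∑ k ∈ S', (HahnSeries.single k (1:ℂ)) • b' k := by
        funext i
        have hsupp : (a' i).support ⊆ ↑S' := by
          intro m hm
          simp only [hS', Finset.coe_biUnion, Finset.coe_univ, Set.mem_iUnion]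
          exact ⟨i, trivial, (fin_supp (a' i) (ha' i)).mem_toFinset.2 hm⟩
        calc a' i = ∑ k ∈ S', HahnSeries.single k ((a' i).coeff k) :=
              sum_single (a' i) S' hsupp
          _ = ∑ k ∈ S', (HahnSeries.single k (1:ℂ)) • b' k i := by
              refine Finset.sum_congr rfl fun k _ => ?_
              rw [hb', smul_eq_mul, HahnSeries.single_mul_single, add_zero, one_mul]
          _ = (∑ k ∈ S', (HahnSeries.single k (1:ℂ)) • b' k) i := by
              simp only [Finset.sum_apply, Pi.smul_apply]
      have hSneg : ∀ k ∈ S, k < 0 := by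
        intro k hk
        simp only [hS, Finset.mem_biUnion] at hk
        obtain ⟨i, _, hk⟩ := hk
        have := (fin_supp (a i) (ha i)).mem_toFinset.1 hk
        by_contra h
        exact this (ha i k (by omega))
      have hS'neg : ∀ k ∈ S', k < 0 := by
        intro k hk
        simp only [hS', Finset.mem_biUnion] at hk
        obtain ⟨i, _, hk⟩ := hk
        have := (fin_supp (a' i) (ha' i)).mem_toFinset.1 hk
        by_contra h
        exact this (ha' i k (by omega))
      rw [hadec', map_sum, coeff_sum]
      refine Finset.sum_eq_zero fun l hl => ?_
      rw [hadec, map_sum, LinearMap.sum_apply, coeff_sum]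
      refine Finset.sum_eq_zero fun k hk => ?_
      rw [hKl, hKr, lbar_single, single_mul_coeff, single_mul_coeff]
      have hz : (K (b k) (b' l)).coeff (n - k - l) = 0 := by
        apply hiii
        · intro i m hm
          exact HahnSeries.coeff_single_of_ne hm
        · intro i m hm
          exact HahnSeries.coeff_single_of_ne hm
        · have := hSneg k hk
          have := hS'neg l hl
          omega
      rw [hz, mul_zero, mul_zero]
end

section
/- In the ring ℂ[[t]][z, z^{-1}] modulo the relation q/z^k ≡ 1/z^{k-2} − (k−1)t/z^{k-1} for all k ≥ 2 (coming from Q_f-exactness for f = z + q/z), every element q^m/z^m with m ≥ 1 is congruent to an element of the ℂ[[t]]-span of {1, q/z}. Concretely: the ℂ[[t]]-module ℂ[[t]][z,z^{-1}] modulo the ℂ[[t]]-submodule generated by {z^k·(z − q/z) : k ∈ ℤ} ∪ {z^{-k}(q/z^2 + t/z − 1) : k ≥ 0} is generated by the classes of 1 and q/z. -/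
open LaurentPolynomial

/-- For `f = z + q/z` (`q ≠ 0`), the `ℂ[[t]]`-module `ℂ[[t]][z,z⁻¹]` modulo the
`ℂ[[t]]`-submodule generated by the `Q_f`-exact relations
`{z^k(z − q/z) : k ∈ ℤ} ∪ {z^{-k}(q/z² + t/z − 1) : k ≥ 0}` is generated by the
classes of `1` and `q/z`. -/
theorem mirror_P1_brieskorn_lattice_generators (q : ℂ) (hq : q ≠ 0) :
    let A := LaurentPolynomial (PowerSeries ℂ)
    let qc : A := C (PowerSeries.C q)
    let tc : A := C (PowerSeries.X)
    let N : Submodule (PowerSeries ℂ) A :=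
      Submodule.span (PowerSeries ℂ)
        ({x | ∃ k : ℤ, x = T k * (T 1 - qc * T (-1))} ∪
         {x | ∃ k : ℕ, x = T (-(k : ℤ)) * (qc * T (-2) + tc * T (-1) - 1)})
    N ⊔ Submodule.span (PowerSeries ℂ) ({1, qc * T (-1)} : Set A) = ⊤ := by
  intro A qc tc N
  set M := N ⊔ Submodule.span (PowerSeries ℂ) ({1, qc * T (-1)} : Set A) with hMdef
  rw [eq_top_iff]
  have hsmul : ∀ (r : PowerSeries ℂ) (x : A), C r * x = r • x := fun r x => by
    rw [C_eq_algebraMap, ← Algebra.smul_def]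
  have h1 : (1 : A) ∈ M :=
    Submodule.mem_sup_right (Submodule.subset_span (Set.mem_insert _ _))
  have hq1 : qc * T (-1) ∈ M :=
    Submodule.mem_sup_right (Submodule.subset_span (Set.mem_insert_of_mem _ rfl))
  have hN1 : ∀ k : ℤ, T k * (T 1 - qc * T (-1)) ∈ M := fun k =>
    Submodule.mem_sup_left (Submodule.subset_span (Or.inl ⟨k, rfl⟩))
  have hN2 : ∀ k : ℕ, T (-(k : ℤ)) * (qc * T (-2) + tc * T (-1) - 1) ∈ M := fun k =>
    Submodule.mem_sup_left (Submodule.subset_span (Or.inr ⟨k, rfl⟩))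
  have hqmul : ∀ x : A, x ∈ M → qc * x ∈ M := fun x hx => by
    rw [hsmul]; exact M.smul_mem _ hx
  have htmul : ∀ x : A, x ∈ M → tc * x ∈ M := fun x hx => by
    rw [hsmul]; exact M.smul_mem _ hx
  have hdiv : ∀ x : A, qc * x ∈ M → x ∈ M := by
    intro x hx
    have hx' : ((PowerSeries.C) q⁻¹) • (qc * x) = x := by
      rw [← hsmul, ← mul_assoc, ← map_mul, ← map_mul, inv_mul_cancel₀ hq, map_one, map_one,
        one_mul]
    exact hx' ▸ M.smul_mem _ hx
  have hTT : ∀ (a b : ℤ) (x : A), T a * (x * T b) = x * T (a + b) := fun a b x => by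
    rw [T_mul, mul_assoc, ← T_add, add_comm]
  -- going up by 2
  have hup : ∀ k : ℤ, T k ∈ M → T (k + 2) ∈ M := by
    intro k hk
    have hid : T (k + 1) * (T 1 - qc * T (-1)) = T (k + 1 + 1) - qc * T (k + 1 + -1) := by
      rw [mul_sub, ← T_add, hTT]
    have e1 : k + 1 + 1 = k + 2 := by ring
    have e2 : k + 1 + -1 = k := by ring
    rw [e1, e2] at hid
    have hmem : T (k + 2) - qc * T k ∈ M := hid ▸ hN1 (k + 1)
    have := M.add_mem hmem (hqmul _ hk)
    simpa using this
  -- going down by 2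
  have hdown : ∀ k : ℕ, T (-(k : ℤ)) ∈ M → T (-(k : ℤ) - 1) ∈ M → T (-(k : ℤ) - 2) ∈ M := by
    intro k h0 h1'
    have hid : T (-(k : ℤ)) * (qc * T (-2) + tc * T (-1) - 1)
        = qc * T (-(k : ℤ) + -2) + tc * T (-(k : ℤ) + -1) - T (-(k : ℤ)) := by
      rw [mul_sub, mul_add, mul_one, hTT, hTT]
    have e1 : -(k : ℤ) + -2 = -(k : ℤ) - 2 := by ring
    have e2 : -(k : ℤ) + -1 = -(k : ℤ) - 1 := by ring
    rw [e1, e2] at hid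
    have hmem : qc * T (-(k : ℤ) - 2) + tc * T (-(k : ℤ) - 1) - T (-(k : ℤ)) ∈ M :=
      hid ▸ hN2 k
    have hqm : qc * T (-(k : ℤ) - 2) ∈ M := by
      have := M.add_mem (M.sub_mem (M.add_mem hmem h0) (htmul _ h1')) (M.zero_mem)
      simpa using this
    exact hdiv _ hqm
  have hT1 : (T 1 : A) ∈ M := by
    have hid : T (0 : ℤ) * (T 1 - qc * T (-1)) = T 1 - qc * T (-1) := by
      rw [T_zero, one_mul]
    have hmem : (T 1 : A) - qc * T (-1) ∈ M := hid ▸ hN1 0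
    have := M.add_mem hmem hq1
    simpa using this
  have hT0 : (T (0 : ℤ) : A) ∈ M := by rw [T_zero]; exact h1
  have hTm1 : (T (-1 : ℤ) : A) ∈ M := hdiv _ hq1
  have hpos : ∀ n : ℕ, T (n : ℤ) ∈ M ∧ T ((n : ℤ) + 1) ∈ M := by
    intro n
    induction n with
    | zero => exact ⟨hT0, by simpa using hT1⟩
    | succ n ih =>
      refine ⟨by push_cast; simpa using ih.2, ?_⟩
      have := hup (n : ℤ) ih.1
      rw [show (((n + 1 : ℕ) : ℤ) + 1) = (n : ℤ) + 2 by push_cast; ring]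
      exact this
  have hneg : ∀ n : ℕ, T (-(n : ℤ)) ∈ M ∧ T (-(n : ℤ) - 1) ∈ M := by
    intro n
    induction n with
    | zero => exact ⟨by simpa using hT0, by simpa using hTm1⟩
    | succ n ih =>
      constructor
      · rw [show (-((n + 1 : ℕ) : ℤ)) = -(n : ℤ) - 1 by push_cast; ring]
        exact ih.2
      · rw [show (-((n + 1 : ℕ) : ℤ) - 1) = -(n : ℤ) - 2 by push_cast; ring]
        exact hdown n ih.1 ih.2
  have hT : ∀ n : ℤ, (T n : A) ∈ M := by
    intro n
    rcases le_or_gt 0 n with h | h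
    · have := (hpos n.toNat).1
      rwa [Int.toNat_of_nonneg h] at this
    · have := (hneg (-n).toNat).1
      rwa [Int.toNat_of_nonneg (by omega), neg_neg] at this
  intro p _
  refine p.induction_on' (fun f g hf hg => M.add_mem hf hg) fun n a => ?_
  rw [hsmul]
  exact M.smul_mem a (hT n)
end
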